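/- Let F be a field with char F ≠ 2 and char F ≠ 3, let β₁,β₂ ∈ F, and let A = A₄(β₁,β₂) = [[0, 1, 1, 0],[β₁, β₂, 1, -1]]. Then the only invertible 2×2 matrix g over F with gA = A(g⊗g) is the identity matrix, and the only 2×2 matrix D with DA = A(D⊗I₂ + I₂⊗D) is the zero matrix. -/
import Mathlib


open Matrix Kronecker

/-- The matrix of structure constants (MSC) of a 2-dimensional algebra, as a
`2 × (2 × 2)` matrix: the column indexed by `(j,k)` corresponds to the product
`e_j · e_k`, so the columns in order `(0,0), (0,1), (1,0), (1,1)` carry the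
entries `α₁ α₂ α₃ α₄` (first row) and `β₁ β₂ β₃ β₄` (second row). -/
def MSC {F : Type*} [Field F] (a1 a2 a3 a4 b1 b2 b3 b4 : F) :
    Matrix (Fin 2) (Fin 2 × Fin 2) F :=
  Matrix.of fun i j => !![a1, a2, a3, a4; b1, b2, b3, b4] i (finProdFinEquiv j)

/-- `g` is an automorphism matrix of the algebra with MSC `A`:
`g` is invertible and `g • A = A • (g ⊗ g)`. -/
def IsAutoMat {F : Type*} [Field F] (A : Matrix (Fin 2) (Fin 2 × Fin 2) F)
    (g : Matrix (Fin 2) (Fin 2) F) : Prop :=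
  IsUnit g ∧ g * A = A * (g ⊗ₖ g)

/-- `D` is a derivation matrix of the algebra with MSC `A`:
`D • A = A • (D ⊗ I + I ⊗ D)`. -/
def IsDerMat {F : Type*} [Field F] (A : Matrix (Fin 2) (Fin 2 × Fin 2) F)
    (D : Matrix (Fin 2) (Fin 2) F) : Prop :=
  D * A = A * (D ⊗ₖ (1 : Matrix (Fin 2) (Fin 2) F) + (1 : Matrix (Fin 2) (Fin 2) F) ⊗ₖ D)

theorem stmt_5 {F : Type*} [Field F] (h2 : ringChar F ≠ 2) (h3 : ringChar F ≠ 3)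
    (b1 b2 : F)
    (A : Matrix (Fin 2) (Fin 2 × Fin 2) F)
    (hA : A = MSC 0 1 1 0 b1 b2 1 (-1)) :
    (∀ g : Matrix (Fin 2) (Fin 2) F, IsAutoMat A g ↔ g = 1) ∧
    (∀ D : Matrix (Fin 2) (Fin 2) F, IsDerMat A D ↔ D = 0) := by
  subst hA
  have h2' : (2 : F) ≠ 0 := Ring.two_ne_zero h2
  have h3' : (3 : F) ≠ 0 := fun h =>
    h3 (CharP.ringChar_of_prime_eq_zero Nat.prime_three (by exact_mod_cast h))
  constructor
  · intro g
    constructor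
    · rintro ⟨hu, heq⟩
      have hdet : g.det ≠ 0 := by
        simpa [isUnit_iff_ne_zero] using (Matrix.isUnit_iff_isUnit_det g).mp hu
      have h1 := congrFun (congrFun heq 0) (0,0)
      have hh2 := congrFun (congrFun heq 0) (0,1)
      have hh3 := congrFun (congrFun heq 0) (1,0)
      have h4 := congrFun (congrFun heq 0) (1,1)
      have G3 := congrFun (congrFun heq 1) (1,0)
      have G4 := congrFun (congrFun heq 1) (1,1)
      simp [MSC, Matrix.mul_apply, Fintype.sum_prod_type, Fin.sum_univ_two,
        Matrix.kroneckerMap_apply, finProdFinEquiv] at h1 hh2 hh3 h4 G3 G4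
      set a := g 0 0 with ha
      set b := g 0 1 with hb
      set c := g 1 0 with hc
      set d := g 1 1 with hd
      have hdetv : g.det = a * d - b * c := Matrix.det_fin_two g
      by_cases hb0 : b = 0
      · -- b = 0 : then d = 1, c = 0, a = 1
        have hane : a ≠ 0 := fun h0 => hdet (by rw [hdetv, h0, hb0]; ring)
        have hd1 : d = 1 := by
          have : a * d = a * 1 := by linear_combination -hh3 + (1 - c) * hb0
          exact mul_left_cancel₀ hane this
        have hc0 : c = 0 := by
          have : (2 * a) * c = (2 * a) * 0 := by linear_combination -h1 + b1 * hb0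
          exact mul_left_cancel₀ (mul_ne_zero h2' hane) this
        have ha1 : a = 1 := by
          rw [hb0, hc0, hd1] at G3
          linear_combination -G3
        ext i j
        fin_cases i <;> fin_cases j <;>
          simp [Matrix.one_apply, ← ha, ← hb, ← hc, ← hd, ha1, hb0, hc0, hd1]
      · -- b ≠ 0 : contradiction with invertibility
        exfalso
        have hb2 : b2 = 1 := by
          have : b * b2 = b * 1 := by linear_combination hh2 - hh3
          exact mul_left_cancel₀ hb0 this
        subst hb2
        have h2d : 2 * d = -1 := by
          have : b * (2 * d) = b * (-1) := by linear_combination -h4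
          exact mul_left_cancel₀ hb0 this
        have h16 : (16 : F) ≠ 0 := by
          have : (16 : F) = 2 ^ 4 := by norm_num
          rw [this]; exact pow_ne_zero _ h2'
        apply hdet
        rw [hdetv]
        have key : (16 * b) * (a * d - b * c) = (16 * b) * 0 := by
          linear_combination 16 * b * G3 + 8 * hh3 - 16 * a * G4 +
            (8 * (a * d - b * c - b - a)) * h2d
        have := mul_left_cancel₀ (mul_ne_zero h16 hb0) key
        simpa using this
    · rintro rfl
      refine ⟨isUnit_one, ?_⟩
      simp [Matrix.one_kronecker_one]
  · intro D
    constructor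
    · intro heq
      unfold IsDerMat at heq
      have h1 := congrFun (congrFun heq 0) (0,0)
      have hh3 := congrFun (congrFun heq 0) (1,0)
      have h4 := congrFun (congrFun heq 0) (1,1)
      have G3 := congrFun (congrFun heq 1) (1,0)
      simp [MSC, Matrix.mul_apply, Matrix.add_apply, Fintype.sum_prod_type, Fin.sum_univ_two,
        Matrix.kroneckerMap_apply, Matrix.one_apply, finProdFinEquiv] at h1 hh3 h4 G3
      set a := D 0 0 with ha
      set b := D 0 1 with hb
      set c := D 1 0 with hc
      set d := D 1 1 with hd
      have hb0 : b = 0 := by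
        have : 3 * b = 3 * 0 := by linear_combination -h4
        exact mul_left_cancel₀ h3' this
      have hd0 : d = 0 := by linear_combination -hh3 + hb0
      have hc0 : c = 0 := by
        have : 2 * c = 2 * 0 := by linear_combination -h1 + b1 * hb0
        exact mul_left_cancel₀ h2' this
      have ha0 : a = 0 := by linear_combination -G3 + 2 * hc0 - b1 * hb0
      ext i j
      fin_cases i <;> fin_cases j <;>
        simp [← ha, ← hb, ← hc, ← hd, ha0, hb0, hc0, hd0]
    · rintro rfl
      unfold IsDerMat
      simp
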